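/- With σ as above and τ of order q, conjugation by σ_s satisfies c_{σ_s}(ω^{sd}(τ²)) = ω^{(s-1)d}(τ²) for s = 1,...,n-1, and the restriction of c_{σ_s} to the abelian subgroup A_n(σ) = B_n(σ) ∩ ⟨τ⟩^{(n)} is an involution (i.e., c_{σ_s}² = id on A_n(σ)). -/

import Mathlib

/-- The shift of a permutation of `ℕ` up by `d`: fixes `{0,…,d-1}` and acts as `σ`
conjugated by `k ↦ k + d` above. -/
def shift (d : ℕ) (σ : Equiv.Perm ℕ) : Equiv.Perm ℕ where
  toFun k := if k < d then k else σ (k - d) + d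
  invFun k := if k < d then k else σ⁻¹ (k - d) + d
  left_inv k := by
    by_cases h : k < d
    · simp [h]
    · dsimp only
      rw [if_neg h, if_neg (by omega), Nat.add_sub_cancel, Equiv.Perm.inv_eq_iff_eq.mpr rfl]
      omega
  right_inv k := by
    by_cases h : k < d
    · simp [h]
    · dsimp only
      rw [if_neg h, if_neg (by omega), Nat.add_sub_cancel, show σ (σ⁻¹ (k - d)) = k - d from (Equiv.eq_symm_apply _).mp rfl]
      omega

/-- The involution of `ℕ` swapping the blocks `{0,…,d-1}` and `{d,…,2d-1}`. -/
def theta (d : ℕ) : Equiv.Perm ℕ :=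
  Function.Involutive.toPerm
    (fun k => if k < d then k + d else if k < 2 * d then k - d else k)
    (by intro k; dsimp only; split_ifs <;> omega)

section Aux

lemma fixLt {d : ℕ} {π : Equiv.Perm ℕ} (h : ∀ k, d ≤ k → π k = k) {k : ℕ} (hk : k < d) :
    π k < d := by
  by_contra h'
  push_neg at h'
  have h1 : π (π k) = π k := h _ h'
  have := π.injective h1
  omega

lemma shift_apply_of_lt (d : ℕ) (π : Equiv.Perm ℕ) {k : ℕ} (h : k < d) : shift d π k = k := by
  simp [shift, h]

lemma shift_apply_of_ge (d : ℕ) (π : Equiv.Perm ℕ) {k : ℕ} (h : d ≤ k) :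
    shift d π k = π (k - d) + d := by
  simp [shift, Nat.not_lt.2 h]

lemma shift_fix_ge {d e : ℕ} (π : Equiv.Perm ℕ) (hπ : ∀ k, e ≤ k → π k = k) :
    ∀ k, d + e ≤ k → shift d π k = k := by
  intro k hk
  rw [shift_apply_of_ge _ _ (by omega), hπ _ (by omega)]
  omega

lemma shift_mul (d : ℕ) (a b : Equiv.Perm ℕ) : shift d (a * b) = shift d a * shift d b := by
  ext k
  by_cases h : k < d
  · rw [Equiv.Perm.mul_apply, shift_apply_of_lt _ _ h, shift_apply_of_lt _ _ h,
      shift_apply_of_lt _ _ h]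
  · rw [Equiv.Perm.mul_apply, shift_apply_of_ge _ _ (Nat.le_of_not_lt h),
      shift_apply_of_ge _ _ (Nat.le_of_not_lt h),
      shift_apply_of_ge _ _ (by omega : d ≤ b (k - d) + d), Nat.add_sub_cancel,
      Equiv.Perm.mul_apply]

lemma shift_one (d : ℕ) : shift d (1 : Equiv.Perm ℕ) = 1 := by
  ext k
  by_cases h : k < d
  · rw [shift_apply_of_lt _ _ h, Equiv.Perm.one_apply]
  · rw [shift_apply_of_ge _ _ (Nat.le_of_not_lt h), Equiv.Perm.one_apply,
      Equiv.Perm.one_apply]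
    omega

lemma shift_inv (d : ℕ) (a : Equiv.Perm ℕ) : shift d a⁻¹ = (shift d a)⁻¹ := by
  rw [eq_inv_iff_mul_eq_one, ← shift_mul, inv_mul_cancel, shift_one]

lemma shift_shift (a b : ℕ) (π : Equiv.Perm ℕ) : shift a (shift b π) = shift (a + b) π := by
  ext k
  by_cases h : k < a
  · rw [shift_apply_of_lt _ _ h, shift_apply_of_lt _ _ (by omega)]
  · rw [shift_apply_of_ge _ _ (Nat.le_of_not_lt h)]
    by_cases h2 : k < a + b
    · rw [shift_apply_of_lt _ _ (by omega), shift_apply_of_lt _ _ h2]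
      omega
    · rw [shift_apply_of_ge _ _ (by omega : b ≤ k - a), shift_apply_of_ge _ _ (by omega)]
      have : k - a - b = k - (a + b) := by omega
      rw [this]
      omega

lemma comm_sep {a : ℕ} {π ρ : Equiv.Perm ℕ} (hπ : ∀ k, a ≤ k → π k = k)
    (hρ : ∀ k, k < a → ρ k = k) : π * ρ = ρ * π := by
  have hρ' : ∀ k, a ≤ k → a ≤ ρ k := by
    intro k hk
    by_contra h'
    push_neg at h'
    have h1 : ρ (ρ k) = ρ k := hρ _ h'
    have := ρ.injective h1
    omega
  ext k
  rcases lt_or_ge k a with hk | hk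
  · rw [Equiv.Perm.mul_apply, Equiv.Perm.mul_apply, hρ _ hk, hρ _ (fixLt hπ hk)]
  · rw [Equiv.Perm.mul_apply, Equiv.Perm.mul_apply, hπ _ hk, hπ _ (hρ' _ hk)]

lemma theta_coe (d k : ℕ) :
    theta d k = if k < d then k + d else if k < 2 * d then k - d else k := rfl

lemma theta_sq (d : ℕ) : theta d * theta d = 1 := by
  ext k
  rw [Equiv.Perm.mul_apply, Equiv.Perm.one_apply, theta_coe, theta_coe]
  split_ifs <;> omega

lemma theta_conj {d : ℕ} {π : Equiv.Perm ℕ} (h : ∀ k, d ≤ k → π k = k) :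
    theta d * shift d π * theta d = π := by
  ext k
  rw [Equiv.Perm.mul_apply, Equiv.Perm.mul_apply]
  by_cases h1 : k < d
  · have e1 : theta d k = k + d := by rw [theta_coe, if_pos h1]
    rw [e1, shift_apply_of_ge _ _ (by omega), Nat.add_sub_cancel]
    have hk := fixLt h h1
    rw [theta_coe, if_neg (by omega), if_pos (by omega), Nat.add_sub_cancel]
  · by_cases h2 : k < 2 * d
    · have e1 : theta d k = k - d := by rw [theta_coe, if_neg h1, if_pos h2]
      rw [e1, shift_apply_of_lt _ _ (by omega), theta_coe, if_pos (by omega),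
        h _ (by omega)]
      omega
    · have e1 : theta d k = k := by rw [theta_coe, if_neg h1, if_neg h2]
      rw [e1, shift_apply_of_ge _ _ (by omega), h _ (by omega), theta_coe,
        if_neg (by omega), if_neg (by omega), h _ (by omega)]
      omega

end Aux

/-- With `σ = θ·ς₁·ω^d(ς₂)`, `ς₁ς₂ = ς₂ς₁ = τ`, `σ_s = ω^{(s-1)d}(σ)`: conjugation by
`σ_s` sends `ω^{sd}(τ²)` to `ω^{(s-1)d}(τ²)`, and the restriction of `c_{σ_s}` to the
abelian subgroup `Aₙ(σ) = Bₙ(σ) ∩ ⟨τ⟩^{(n)}` is an involution. -/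
theorem stmt_11 (d n : ℕ) (hd : 2 ≤ d) (hn : 3 ≤ n) (ς₁ ς₂ τ : Equiv.Perm ℕ)
    (h₁ : ∀ k, d ≤ k → ς₁ k = k) (h₂ : ∀ k, d ≤ k → ς₂ k = k)
    (hτ : ς₁ * ς₂ = τ) (hτ' : ς₂ * ς₁ = τ)
    (σ : Equiv.Perm ℕ) (hσ : σ = theta d * ς₁ * shift d ς₂)
    (σs : ℕ → Equiv.Perm ℕ) (hσs : ∀ s, σs s = shift ((s - 1) * d) σ)
    (B T A : Subgroup (Equiv.Perm ℕ))
    (hB : B = Subgroup.closure {x | ∃ s, 1 ≤ s ∧ s ≤ n - 1 ∧ x = σs s})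
    (hT : T = Subgroup.closure {x | ∃ k < n, x ∈ Subgroup.zpowers (shift (k * d) τ)})
    (hA : A = B ⊓ T) :
    (∀ s, 1 ≤ s → s ≤ n - 1 →
      σs s * shift (s * d) (τ * τ) * (σs s)⁻¹ = shift ((s - 1) * d) (τ * τ)) ∧
      (∀ s, 1 ≤ s → s ≤ n - 1 → ∀ a ∈ A,
        σs s * (σs s * a * (σs s)⁻¹) * (σs s)⁻¹ = a) := by
  -- basic support facts
  have hτfix : ∀ k, d ≤ k → τ k = k := by
    intro k hk
    rw [← hτ, Equiv.Perm.mul_apply, h₂ _ hk, h₁ _ hk]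
  have hττfix : ∀ k, d ≤ k → (τ * τ) k = k := by
    intro k hk
    rw [Equiv.Perm.mul_apply, hτfix _ hk, hτfix _ hk]
  -- τ commutes with ς₂
  have hcommτ2 : ς₂ * (τ * τ) = (τ * τ) * ς₂ := by
    have h1 : ς₂ * τ = τ * ς₂ := by
      calc ς₂ * τ = ς₂ * ς₁ * ς₂ := by rw [← hτ, mul_assoc]
        _ = τ * ς₂ := by rw [hτ']
    calc ς₂ * (τ * τ) = (ς₂ * τ) * τ := (mul_assoc _ _ _).symm
      _ = (τ * ς₂) * τ := by rw [h1]
      _ = τ * (ς₂ * τ) := mul_assoc _ _ _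
      _ = τ * (τ * ς₂) := by rw [h1]
      _ = (τ * τ) * ς₂ := (mul_assoc _ _ _).symm
  -- commutation facts used to move things around
  have hA1 : shift d ς₂ * shift d (τ * τ) = shift d (τ * τ) * shift d ς₂ := by
    rw [← shift_mul, ← shift_mul, hcommτ2]
  have hB1 : ς₁ * shift d (τ * τ) = shift d (τ * τ) * ς₁ :=
    comm_sep h₁ (fun k hk => shift_apply_of_lt _ _ hk)
  have hθinv : (theta d)⁻¹ = theta d := by
    rw [inv_eq_iff_mul_eq_one, theta_sq]
  have hC1 : theta d * shift d (τ * τ) = (τ * τ) * theta d := by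
    have := theta_conj hττfix
    calc theta d * shift d (τ * τ)
        = theta d * shift d (τ * τ) * theta d * theta d := by
          rw [mul_assoc, mul_assoc, theta_sq, mul_one]
      _ = (τ * τ) * theta d := by rw [this]
  -- the key conjugation identity for σ itself
  have hkey : σ * shift d (τ * τ) = (τ * τ) * σ := by
    rw [hσ]
    calc theta d * ς₁ * shift d ς₂ * shift d (τ * τ)
        = theta d * ς₁ * (shift d ς₂ * shift d (τ * τ)) := by rw [mul_assoc]
      _ = theta d * ς₁ * (shift d (τ * τ) * shift d ς₂) := by rw [hA1]
      _ = theta d * (ς₁ * shift d (τ * τ)) * shift d ς₂ := by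
          simp only [mul_assoc]
      _ = theta d * (shift d (τ * τ) * ς₁) * shift d ς₂ := by rw [hB1]
      _ = (theta d * shift d (τ * τ)) * ς₁ * shift d ς₂ := by
          simp only [mul_assoc]
      _ = (τ * τ) * theta d * ς₁ * shift d ς₂ := by rw [hC1]
      _ = (τ * τ) * (theta d * ς₁ * shift d ς₂) := by
          simp only [mul_assoc]
  have hconj : σ * shift d (τ * τ) * σ⁻¹ = τ * τ := by
    rw [hkey, mul_assoc, mul_inv_cancel, mul_one]
  -- σ² = τ · ω^d(τ)
  have hS2θ : shift d ς₂ * theta d = theta d * ς₂ := by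
    have h := theta_conj h₂
    calc shift d ς₂ * theta d
        = theta d * (theta d * shift d ς₂ * theta d) := by
          rw [← mul_assoc, ← mul_assoc, theta_sq, one_mul]
      _ = theta d * ς₂ := by rw [h]
  have hς1θ : ς₁ * theta d = theta d * shift d ς₁ := by
    have h := theta_conj h₁
    calc ς₁ * theta d = theta d * shift d ς₁ * theta d * theta d := by rw [h]
      _ = theta d * shift d ς₁ := by rw [mul_assoc, mul_assoc, theta_sq, mul_one]
  have hτS1 : τ * shift d ς₁ = shift d ς₁ * τ := by
    exact comm_sep hτfix (fun k hk => shift_apply_of_lt _ _ hk)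
  have hsq : σ * σ = τ * shift d τ := by
    rw [hσ]
    calc theta d * ς₁ * shift d ς₂ * (theta d * ς₁ * shift d ς₂)
        = theta d * ς₁ * (shift d ς₂ * theta d) * (ς₁ * shift d ς₂) := by
          simp only [mul_assoc]
      _ = theta d * (ς₁ * theta d) * ς₂ * (ς₁ * shift d ς₂) := by
          rw [hS2θ]; simp only [mul_assoc]
      _ = theta d * (theta d * shift d ς₁) * ς₂ * (ς₁ * shift d ς₂) := by rw [hς1θ]
      _ = (theta d * theta d) * (shift d ς₁ * (ς₂ * ς₁) * shift d ς₂) := by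
          simp only [mul_assoc]
      _ = shift d ς₁ * τ * shift d ς₂ := by
          rw [theta_sq, hτ', one_mul, mul_assoc]
      _ = τ * (shift d ς₁ * shift d ς₂) := by rw [← hτS1, mul_assoc]
      _ = τ * shift d τ := by rw [← shift_mul, hτ]
  -- generators of T pairwise commute
  have pairComm : ∀ k k' : ℕ,
      shift (k * d) τ * shift (k' * d) τ = shift (k' * d) τ * shift (k * d) τ := by
    have hlow : ∀ (m : ℕ) (j : ℕ), j < m * d → shift (m * d) τ j = j :=
      fun m j hj => shift_apply_of_lt _ _ hj
    have hhigh : ∀ (m : ℕ) (j : ℕ), m * d + d ≤ j → shift (m * d) τ j = j :=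
      fun m j hj => shift_fix_ge _ hτfix j (by omega)
    have key : ∀ k k' : ℕ, k < k' →
        shift (k * d) τ * shift (k' * d) τ = shift (k' * d) τ * shift (k * d) τ := by
      intro k k' hkk'
      have hb : k * d + d ≤ k' * d := by
        calc k * d + d = (k + 1) * d := by ring
          _ ≤ k' * d := Nat.mul_le_mul_right d (by omega)
      exact comm_sep (a := k * d + d) (fun j hj => hhigh k j hj)
        (fun j hj => hlow k' j (by omega))
    intro k k'
    rcases lt_trichotomy k k' with h | h | h
    · exact key k k' h
    · rw [h]
    · exact (key k' k h).symm
  refine ⟨?_, ?_⟩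
  · -- first part: the conjugation formula
    intro s hs1 hs2
    obtain ⟨t, rfl⟩ : ∃ t, s = t + 1 := ⟨s - 1, by omega⟩
    rw [hσs]
    simp only [Nat.add_sub_cancel]
    rw [show (t + 1) * d = t * d + d by ring, ← shift_shift, ← shift_inv,
      ← shift_mul, ← shift_mul, hconj]
  · -- second part: the restriction of conjugation to A is an involution
    intro s hs1 hs2 a ha
    obtain ⟨t, rfl⟩ : ∃ t, s = t + 1 := ⟨s - 1, by omega⟩
    have haT : a ∈ T := ((hA ▸ ha : a ∈ B ⊓ T)).2
    rw [hT] at haT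
    -- every generator block commutes with a
    have gencomm : ∀ k : ℕ, Commute (shift (k * d) τ) a := by
      intro k
      refine Subgroup.closure_induction ?_ ?_ ?_ ?_ haT
      · rintro x ⟨k', _, hx⟩
        obtain ⟨m, rfl⟩ := hx
        exact (show Commute (shift (k * d) τ) (shift (k' * d) τ) from
          pairComm k k').zpow_right m
      · exact Commute.one_right _
      · intro x y _ _ hx hy
        exact hx.mul_right hy
      · intro x _ hx
        exact hx.inv_right
    have hsq_s : σs (t + 1) * σs (t + 1) = shift (t * d) τ * shift ((t + 1) * d) τ := by
      rw [hσs]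
      simp only [Nat.add_sub_cancel]
      rw [← shift_mul, hsq, shift_mul, shift_shift,
        show t * d + d = (t + 1) * d by ring]
    have hcomm : (σs (t + 1) * σs (t + 1)) * a = a * (σs (t + 1) * σs (t + 1)) := by
      rw [hsq_s]
      exact ((gencomm t).mul_left (gencomm (t + 1))).eq
    have hre : σs (t + 1) * (σs (t + 1) * a * (σs (t + 1))⁻¹) * (σs (t + 1))⁻¹ =
        (σs (t + 1) * σs (t + 1)) * a * (σs (t + 1) * σs (t + 1))⁻¹ := by
      group
    rw [hre, hcomm, mul_assoc, mul_inv_cancel, mul_one]
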